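/- For every k > 0 and all x ∈ ℝ, |H_k(x)| ≤ 2/k, where H_k is the piecewise function defined by H_k(x) = 1/(x−k) on (−∞,0], H_k(x) = −x³/(2k⁴) + 7x²/(4k³) − x/k² − 1/k on (0,2k], and H_k(x) = 0 on (2k,∞). -/

import Mathlib

/-- The piecewise transformation function `H_k` of the singularity-minimizing
construction. -/
noncomputable def Hk (k : ℝ) (x : ℝ) : ℝ :=
  if x ≤ 0 then 1 / (x - k)
  else if x ≤ 2 * k then -x ^ 3 / (2 * k ^ 4) + 7 * x ^ 2 / (4 * k ^ 3) - x / k ^ 2 - 1 / k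
  else 0

/-- For every `k > 0` and all real `x`, `|H_k x| ≤ 2 / k`. -/
theorem stmt16 (k : ℝ) (hk : 0 < k) (x : ℝ) : |Hk k x| ≤ 2 / k := by
  have hk' : (0:ℝ) < 2 / k := by positivity
  unfold Hk
  rw [abs_le]
  split_ifs with h1 h2
  · have hxk : x - k < 0 := by linarith
    constructor
    · have e : 1 / (x - k) = -(1 / (k - x)) := by
        field_simp
        rw [← neg_sub k x, div_neg]
      rw [e, neg_le_neg_iff, div_le_div_iff₀ (by linarith) hk]
      nlinarith
    · have : 1 / (x - k) ≤ 0 := by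
        apply div_nonpos_of_nonneg_of_nonpos <;> linarith
      linarith
  · push_neg at h1
    have hk4 : (0:ℝ) < k^4 := by positivity
    constructor
    · rw [neg_le, ← sub_nonneg]
      have key : 2 / k + (-x ^ 3 / (2 * k ^ 4) + 7 * x ^ 2 / (4 * k ^ 3) - x / k ^ 2 - 1 / k)
          = (4*k^3 + (-2*x^3 + 7*x^2*k - 4*x*k^2))/(4*k^4) := by
        field_simp; ring
      rw [sub_neg_eq_add, key]
      apply div_nonneg _ (by positivity)
      nlinarith [sq_nonneg (x - 2*k), sq_nonneg (x*k - 2*k^2), sq_nonneg x, mul_pos h1 hk]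
    · have key : 2 / k - (-x ^ 3 / (2 * k ^ 4) + 7 * x ^ 2 / (4 * k ^ 3) - x / k ^ 2 - 1 / k)
          = (12*k^3 + 2*x^3 - 7*x^2*k + 4*x*k^2)/(4*k^4) := by
        field_simp; ring
      rw [← sub_nonneg, key]
      apply div_nonneg _ (by positivity)
      nlinarith [sq_nonneg (x - 2*k), sq_nonneg (x - k), mul_pos h1 hk, sq_nonneg x]
  · simp
    positivity
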